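/- Let $\mathbf{A} = (A_i)_{i \in [m]}$ be a system of events in a probability space with $\Pr(A_i) > 0$ for all $i$, and let $\mathbf{D}$ be a directed graph on vertex set $[m]$ with closed neighborhoods $D_i$. Define the mixing coefficient $\varphi = \max_{i \in [m]} |\Pr(\bigcup_{j \in [i-1] \setminus D_i} A_j \mid A_i) - \Pr(\bigcup_{j \in [i-1] \setminus D_i} A_j)|$ and declustering coefficients $\Delta_1 = \sum_{i \in [m]} \sum_{j \in [i-1] \cap D_i} \Pr(A_i \cap A_j)$ and $\Delta_2 = \sum_{i \in [m]} \sum_{j \in [i-1] \cap D_i} \Pr(A_i)\Pr(A_j)$. Then $|\Pr(\bigcap_{i \in [m]} \overline{A_i}) - \prod_{i \in [m]} \Pr(\overline{A_i})| \leq (1 - \prod_{i \in [m]} \Pr(\overline{A_i})) \varphi + \max\{\Delta_1, \Delta_2\}$. -/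

import Mathlib

open MeasureTheory Finset

/-- **Extremal independence bound (Isaev–Rodionov–Zhang–Zhukovskii).**
For a system of events `A i`, `i ∈ [m]`, with positive probabilities and a (directed)
dependency graph given by closed neighbourhoods `D i ∋ i`, with mixing coefficient `φ`
and declustering coefficients `Δ₁`, `Δ₂`, one has
`|P(⋂ Aᵢᶜ) - ∏ P(Aᵢᶜ)| ≤ (1 - ∏ P(Aᵢᶜ)) φ + max Δ₁ Δ₂`. -/
theorem stmt0 {Ω : Type*} [MeasurableSpace Ω] (μ : Measure Ω) [IsProbabilityMeasure μ]
    (m : ℕ) (A : Fin m → Set Ω) (hAmeas : ∀ i, MeasurableSet (A i))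
    (hApos : ∀ i, 0 < (μ (A i)).toReal)
    (D : Fin m → Finset (Fin m)) (hD : ∀ i, i ∈ D i)
    (φ Δ₁ Δ₂ : ℝ)
    (hφ : ∀ i : Fin m,
      |(μ ((⋃ j ∈ Finset.univ.filter (fun j => j < i ∧ j ∉ D i), A j) ∩ A i)).toReal
          / (μ (A i)).toReal
        - (μ (⋃ j ∈ Finset.univ.filter (fun j => j < i ∧ j ∉ D i), A j)).toReal| ≤ φ)
    (hΔ₁ : Δ₁ = ∑ i : Fin m, ∑ j ∈ (Finset.univ.filter (fun j => j < i)) ∩ D i,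
      (μ (A i ∩ A j)).toReal)
    (hΔ₂ : Δ₂ = ∑ i : Fin m, ∑ j ∈ (Finset.univ.filter (fun j => j < i)) ∩ D i,
      (μ (A i)).toReal * (μ (A j)).toReal) :
    |(μ (⋂ i : Fin m, (A i)ᶜ)).toReal - ∏ i : Fin m, (μ ((A i)ᶜ)).toReal|
      ≤ (1 - ∏ i : Fin m, (μ ((A i)ᶜ)).toReal) * φ + max Δ₁ Δ₂ := by
  classical
  have hfin : ∀ s : Set Ω, μ s ≠ ⊤ := fun s => measure_ne_top μ s
  -- split lemma in the reals
  have hsplit : ∀ (v t : Set Ω), MeasurableSet t →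
      (μ (v ∩ t)).toReal + (μ (v ∩ tᶜ)).toReal = (μ v).toReal := by
    intro v t ht
    rw [← ENNReal.toReal_add (hfin _) (hfin _), ← Set.diff_eq, measure_inter_add_diff v ht]
  have hle1 : ∀ s : Set Ω, (μ s).toReal ≤ 1 := by
    intro s
    have := prob_le_one (μ := μ) (s := s)
    simpa using ENNReal.toReal_mono (by simp) this
  have hcompl : ∀ t : Set Ω, MeasurableSet t → (μ tᶜ).toReal = 1 - (μ t).toReal := by
    intro t ht
    have h := hsplit Set.univ t ht
    simp only [Set.univ_inter, measure_univ, ENNReal.toReal_one] at h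
    linarith
  -- the sets
  set U : Fin m → Set Ω := fun i => ⋃ j ∈ Finset.univ.filter (fun j => j < i), A j with hUdef
  set B : Fin m → Set Ω := fun i => ⋃ j ∈ Finset.univ.filter (fun j => j < i ∧ j ∉ D i), A j
    with hBdef
  have hUmeas : ∀ i, MeasurableSet (U i) := fun i =>
    Finset.measurableSet_biUnion _ (fun j _ => hAmeas j)
  have hBmeas : ∀ i, MeasurableSet (B i) := fun i =>
    Finset.measurableSet_biUnion _ (fun j _ => hAmeas j)
  -- the processes
  set I : ℕ → ℝ := fun k =>
    (μ (⋂ j ∈ Finset.univ.filter (fun j : Fin m => (j : ℕ) < k), (A j)ᶜ)).toReal with hIdef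
  set W : ℕ → ℝ := fun k =>
    ∏ j ∈ Finset.univ.filter (fun j : Fin m => k ≤ (j : ℕ)), (μ ((A j)ᶜ)).toReal with hWdef
  set G : ℕ → ℝ := fun k => I k * W k with hGdef
  -- finset identities
  have hs_lt : ∀ i : Fin m, Finset.univ.filter (fun j : Fin m => (j : ℕ) < (i : ℕ))
      = Finset.univ.filter (fun j : Fin m => j < i) := by
    intro i; ext j; simp only [Finset.mem_filter, Finset.mem_univ, true_and]
    exact Fin.lt_def.symm
  have hs_succ : ∀ i : Fin m, Finset.univ.filter (fun j : Fin m => (j : ℕ) < (i : ℕ) + 1)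
      = insert i (Finset.univ.filter (fun j : Fin m => (j : ℕ) < (i : ℕ))) := by
    intro i; ext j
    simp only [Finset.mem_filter, Finset.mem_univ, true_and, Finset.mem_insert]
    constructor
    · intro h
      rcases Nat.lt_succ_iff_lt_or_eq.1 h with h | h
      · exact Or.inr h
      · exact Or.inl (Fin.ext h)
    · rintro (rfl | h)
      · omega
      · omega
  have hw_succ : ∀ i : Fin m, Finset.univ.filter (fun j : Fin m => (i : ℕ) ≤ (j : ℕ))
      = insert i (Finset.univ.filter (fun j : Fin m => (i : ℕ) + 1 ≤ (j : ℕ))) := by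
    intro i; ext j
    simp only [Finset.mem_filter, Finset.mem_univ, true_and, Finset.mem_insert, Fin.ext_iff]
    omega
  have hinotmem1 : ∀ i : Fin m, i ∉ Finset.univ.filter (fun j : Fin m => (j : ℕ) < (i : ℕ)) := by
    intro i; simp
  have hinotmem2 : ∀ i : Fin m,
      i ∉ Finset.univ.filter (fun j : Fin m => (i : ℕ) + 1 ≤ (j : ℕ)) := by
    intro i; simp
  -- intersection identity
  have hIU : ∀ i : Fin m,
      (⋂ j ∈ Finset.univ.filter (fun j : Fin m => (j : ℕ) < (i : ℕ)), (A j)ᶜ) = (U i)ᶜ := by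
    intro i
    rw [hs_lt i, hUdef]
    exact (Set.compl_iUnion₂ _).symm
  -- step identity
  have hstep : ∀ i : Fin m, G ((i : ℕ) + 1) - G (i : ℕ)
      = W ((i : ℕ) + 1) * ((μ (A i ∩ U i)).toReal
          - (μ (A i)).toReal * (μ (U i)).toReal) := by
    intro i
    have hI_lt : I (i : ℕ) = 1 - (μ (U i)).toReal := by
      rw [hIdef]; simp only; rw [hIU i, hcompl _ (hUmeas i)]
    have hW_lt : W (i : ℕ) = (μ ((A i)ᶜ)).toReal * W ((i : ℕ) + 1) := by
      rw [hWdef]; simp only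
      rw [hw_succ i, Finset.prod_insert (hinotmem2 i)]
    have hI_succ : I ((i : ℕ) + 1) = (1 - (μ (U i)).toReal)
        - ((μ (A i)).toReal - (μ (A i ∩ U i)).toReal) := by
      have h1 : (⋂ j ∈ Finset.univ.filter (fun j : Fin m => (j : ℕ) < (i : ℕ) + 1), (A j)ᶜ)
          = (U i)ᶜ ∩ (A i)ᶜ := by
        rw [hs_succ i, Finset.set_biInter_insert, hIU i, Set.inter_comm]
      have h2 := hsplit ((U i)ᶜ) (A i) (hAmeas i)
      have h3 := hsplit (A i) (U i) (hUmeas i)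
      have h4 : (μ ((U i)ᶜ ∩ A i)).toReal = (μ (A i ∩ (U i)ᶜ)).toReal := by
        rw [Set.inter_comm]
      have h5 : (μ ((U i)ᶜ)).toReal = 1 - (μ (U i)).toReal := hcompl _ (hUmeas i)
      rw [hIdef]; simp only; rw [h1]
      linarith
    have hpc : (μ ((A i)ᶜ)).toReal = 1 - (μ (A i)).toReal := hcompl _ (hAmeas i)
    rw [hGdef]; simp only
    rw [hI_succ, hI_lt, hW_lt, hpc]
    ring
  -- e and r
  set e : Fin m → ℝ := fun i =>
    (μ (A i ∩ B i)).toReal - (μ (A i)).toReal * (μ (B i)).toReal with hedef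
  set r : Fin m → ℝ := fun i =>
    ((μ (A i ∩ U i)).toReal - (μ (A i ∩ B i)).toReal)
      - (μ (A i)).toReal * ((μ (U i)).toReal - (μ (B i)).toReal) with hrdef
  set T1 : Fin m → ℝ := fun i =>
    ∑ j ∈ (Finset.univ.filter (fun j => j < i)) ∩ D i, (μ (A i ∩ A j)).toReal with hT1def
  set T2 : Fin m → ℝ := fun i =>
    ∑ j ∈ (Finset.univ.filter (fun j => j < i)) ∩ D i, (μ (A j)).toReal with hT2def
  -- bound on e
  have he_bound : ∀ i : Fin m, |e i| ≤ (μ (A i)).toReal * φ := by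
    intro i
    have h := hφ i
    have hBA : (⋃ j ∈ Finset.univ.filter (fun j => j < i ∧ j ∉ D i), A j) ∩ A i
        = A i ∩ B i := by rw [Set.inter_comm, hBdef]
    rw [hBA] at h
    have ha := hApos i
    have key : e i = (μ (A i)).toReal
        * ((μ (A i ∩ B i)).toReal / (μ (A i)).toReal - (μ (B i)).toReal) := by
      rw [hedef]; field_simp
    rw [key, abs_mul, abs_of_pos ha]
    have : (μ (⋃ j ∈ Finset.univ.filter (fun j => j < i ∧ j ∉ D i), A j)).toReal
        = (μ (B i)).toReal := by rw [hBdef]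
    rw [this] at h
    exact mul_le_mul_of_nonneg_left h ha.le
  -- bounds on r
  have hBU : ∀ i : Fin m, B i ⊆ U i := by
    intro i ω hω
    rw [hBdef] at hω
    simp only [Set.mem_iUnion, Finset.mem_filter, Finset.mem_univ, true_and] at hω
    obtain ⟨j, hj, hωj⟩ := hω
    rw [hUdef]
    simp only [Set.mem_iUnion, Finset.mem_filter, Finset.mem_univ, true_and]
    exact ⟨j, hj.1, hωj⟩
  have hUsub : ∀ i : Fin m, U i ⊆ B i ∪
      ⋃ j ∈ (Finset.univ.filter (fun j => j < i)) ∩ D i, A j := by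
    intro i ω hω
    rw [hUdef] at hω
    simp only [Set.mem_iUnion, Finset.mem_filter, Finset.mem_univ, true_and] at hω
    obtain ⟨j, hj, hωj⟩ := hω
    by_cases hjD : j ∈ D i
    · right
      simp only [Set.mem_iUnion, Finset.mem_inter, Finset.mem_filter, Finset.mem_univ, true_and]
      exact ⟨j, ⟨hj, hjD⟩, hωj⟩
    · left
      rw [hBdef]
      simp only [Set.mem_iUnion, Finset.mem_filter, Finset.mem_univ, true_and]
      exact ⟨j, ⟨hj, hjD⟩, hωj⟩
  have hsum_ne_top : ∀ (t : Finset (Fin m)) (f : Fin m → Set Ω),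
      (∑ j ∈ t, μ (f j)) ≠ ⊤ := by
    intro t f
    exact (ENNReal.sum_lt_top.2 (fun j _ => (hfin _).lt_top)).ne
  have hub_gen : ∀ (v w : Set Ω) (t : Finset (Fin m)) (f : Fin m → Set Ω),
      v ⊆ w ∪ ⋃ j ∈ t, f j →
      (μ v).toReal ≤ (μ w).toReal + ∑ j ∈ t, (μ (f j)).toReal := by
    intro v w t f hsub
    have h1 : μ v ≤ μ w + ∑ j ∈ t, μ (f j) := by
      calc μ v ≤ μ (w ∪ ⋃ j ∈ t, f j) := measure_mono hsub
        _ ≤ μ w + μ (⋃ j ∈ t, f j) := measure_union_le _ _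
        _ ≤ _ := add_le_add_right (measure_biUnion_finset_le _ _) _
    calc (μ v).toReal ≤ (μ w + ∑ j ∈ t, μ (f j)).toReal :=
          ENNReal.toReal_mono (ENNReal.add_ne_top.2 ⟨hfin _, hsum_ne_top _ _⟩) h1
      _ = _ := by
          rw [ENNReal.toReal_add (hfin _) (hsum_ne_top _ _),
            ENNReal.toReal_sum (fun j _ => hfin _)]
  have hmono1 : ∀ i : Fin m, (μ (A i ∩ B i)).toReal ≤ (μ (A i ∩ U i)).toReal := fun i =>
    ENNReal.toReal_mono (hfin _) (measure_mono (Set.inter_subset_inter_right _ (hBU i)))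
  have hmono2 : ∀ i : Fin m, (μ (B i)).toReal ≤ (μ (U i)).toReal := fun i =>
    ENNReal.toReal_mono (hfin _) (measure_mono (hBU i))
  have hu_ub : ∀ i : Fin m, (μ (U i)).toReal ≤ (μ (B i)).toReal + T2 i := by
    intro i
    rw [hT2def]
    exact hub_gen _ _ _ _ (hUsub i)
  have hx_ub : ∀ i : Fin m,
      (μ (A i ∩ U i)).toReal ≤ (μ (A i ∩ B i)).toReal + T1 i := by
    intro i
    rw [hT1def]
    apply hub_gen (A i ∩ U i) (A i ∩ B i) _ (fun j => A i ∩ A j)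
    intro ω hω
    rcases hUsub i hω.2 with h | h
    · exact Or.inl ⟨hω.1, h⟩
    · obtain ⟨j, hj, hωj⟩ := Set.mem_iUnion₂.1 h
      exact Or.inr (Set.mem_biUnion hj ⟨hω.1, hωj⟩)
  have hT1nn : ∀ i : Fin m, 0 ≤ T1 i := by
    intro i; rw [hT1def]; exact Finset.sum_nonneg fun j _ => ENNReal.toReal_nonneg
  have hT2nn : ∀ i : Fin m, 0 ≤ T2 i := by
    intro i; rw [hT2def]; exact Finset.sum_nonneg fun j _ => ENNReal.toReal_nonneg
  have hr_ub : ∀ i : Fin m, r i ≤ T1 i := by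
    intro i
    have h1 := hx_ub i
    have h2 := hmono2 i
    have ha : (0:ℝ) ≤ (μ (A i)).toReal := ENNReal.toReal_nonneg
    have h3 : 0 ≤ (μ (A i)).toReal * ((μ (U i)).toReal - (μ (B i)).toReal) :=
      mul_nonneg ha (by linarith)
    rw [hrdef]
    simp only
    linarith
  have hr_lb : ∀ i : Fin m, -((μ (A i)).toReal * T2 i) ≤ r i := by
    intro i
    have h1 := hmono1 i
    have h2 := hu_ub i
    have ha : (0:ℝ) ≤ (μ (A i)).toReal := ENNReal.toReal_nonneg
    have h3 : (μ (A i)).toReal * ((μ (U i)).toReal - (μ (B i)).toReal)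
        ≤ (μ (A i)).toReal * T2 i :=
      mul_le_mul_of_nonneg_left (by linarith) ha
    rw [hrdef]
    simp only
    linarith
  -- properties of W
  have hWnn : ∀ k, 0 ≤ W k := by
    intro k; rw [hWdef]; exact Finset.prod_nonneg fun j _ => ENNReal.toReal_nonneg
  have hWle1 : ∀ k, W k ≤ 1 := by
    intro k; rw [hWdef]
    exact Finset.prod_le_one (fun j _ => ENNReal.toReal_nonneg) (fun j _ => hle1 _)
  have hW_lt : ∀ i : Fin m, W (i : ℕ) = (μ ((A i)ᶜ)).toReal * W ((i : ℕ) + 1) := by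
    intro i
    rw [hWdef]; simp only
    rw [hw_succ i, Finset.prod_insert (hinotmem2 i)]
  have hWm : W m = 1 := by
    rw [hWdef]; simp only
    rw [Finset.filter_false_of_mem (fun j _ => Nat.not_le.mpr j.isLt), Finset.prod_empty]
  have hW0 : W 0 = ∏ i : Fin m, (μ ((A i)ᶜ)).toReal := by
    rw [hWdef]; simp only
    rw [Finset.filter_true_of_mem (fun j _ => Nat.zero_le _)]
  have hGm : G m = (μ (⋂ i : Fin m, (A i)ᶜ)).toReal := by
    rw [hGdef]; simp only
    rw [hWm, mul_one, hIdef]; simp only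
    congr 2
    rw [Finset.filter_true_of_mem (fun j _ => j.isLt)]
    ext ω; simp
  have hG0 : G 0 = ∏ i : Fin m, (μ ((A i)ᶜ)).toReal := by
    rw [hGdef]; simp only
    rw [hW0, hIdef]; simp only
    have : Finset.univ.filter (fun j : Fin m => (j : ℕ) < 0) = ∅ := by
      apply Finset.filter_false_of_mem; intro j _; omega
    rw [this]
    simp
  have hGsum : ∑ i : Fin m, (G ((i : ℕ) + 1) - G (i : ℕ))
      = (μ (⋂ i : Fin m, (A i)ᶜ)).toReal - ∏ i : Fin m, (μ ((A i)ᶜ)).toReal := by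
    rw [Fin.sum_univ_eq_sum_range (fun k => G (k + 1) - G k) m, Finset.sum_range_sub,
      hGm, hG0]
  have hWsum : ∑ i : Fin m, W ((i : ℕ) + 1) * (μ (A i)).toReal
      = 1 - ∏ i : Fin m, (μ ((A i)ᶜ)).toReal := by
    have hterm : ∀ i : Fin m,
        W ((i : ℕ) + 1) * (μ (A i)).toReal = W ((i : ℕ) + 1) - W (i : ℕ) := by
      intro i
      have hpc : (μ ((A i)ᶜ)).toReal = 1 - (μ (A i)).toReal := hcompl _ (hAmeas i)
      rw [hW_lt i, hpc]
      ring
    rw [Finset.sum_congr rfl (fun i _ => hterm i),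
      Fin.sum_univ_eq_sum_range (fun k => W (k + 1) - W k) m, Finset.sum_range_sub,
      hWm, hW0]
  -- decomposition
  have hdecomp : (μ (⋂ i : Fin m, (A i)ᶜ)).toReal - ∏ i : Fin m, (μ ((A i)ᶜ)).toReal
      = (∑ i : Fin m, W ((i : ℕ) + 1) * e i) + ∑ i : Fin m, W ((i : ℕ) + 1) * r i := by
    rw [← hGsum, ← Finset.sum_add_distrib]
    apply Finset.sum_congr rfl
    intro i _
    rw [hstep i, hedef, hrdef]
    ring
  have hE : |∑ i : Fin m, W ((i : ℕ) + 1) * e i|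
      ≤ (1 - ∏ i : Fin m, (μ ((A i)ᶜ)).toReal) * φ := by
    calc |∑ i : Fin m, W ((i : ℕ) + 1) * e i|
        ≤ ∑ i : Fin m, |W ((i : ℕ) + 1) * e i| := Finset.abs_sum_le_sum_abs _ _
      _ ≤ ∑ i : Fin m, W ((i : ℕ) + 1) * ((μ (A i)).toReal * φ) := by
          apply Finset.sum_le_sum
          intro i _
          rw [abs_mul, abs_of_nonneg (hWnn _)]
          exact mul_le_mul_of_nonneg_left (he_bound i) (hWnn _)
      _ = (∑ i : Fin m, W ((i : ℕ) + 1) * (μ (A i)).toReal) * φ := by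
          rw [Finset.sum_mul]
          exact Finset.sum_congr rfl fun i _ => by ring
      _ = _ := by rw [hWsum]
  have hR_ub : ∑ i : Fin m, W ((i : ℕ) + 1) * r i ≤ Δ₁ := by
    rw [hΔ₁]
    apply Finset.sum_le_sum
    intro i _
    have h1 := hr_ub i
    have h2 := hWnn ((i : ℕ) + 1)
    have h3 := hWle1 ((i : ℕ) + 1)
    nlinarith [mul_nonneg (sub_nonneg.2 h3) (hT1nn i), mul_nonneg h2 (sub_nonneg.2 h1)]
  have hΔ₂' : Δ₂ = ∑ i : Fin m, (μ (A i)).toReal * T2 i := by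
    rw [hΔ₂]
    apply Finset.sum_congr rfl
    intro i _
    rw [hT2def, Finset.mul_sum]
  have hR_lb : -Δ₂ ≤ ∑ i : Fin m, W ((i : ℕ) + 1) * r i := by
    rw [hΔ₂', ← Finset.sum_neg_distrib]
    apply Finset.sum_le_sum
    intro i _
    have h1 := hr_lb i
    have h2 := hWnn ((i : ℕ) + 1)
    have h3 := hWle1 ((i : ℕ) + 1)
    have h4 : 0 ≤ (μ (A i)).toReal * T2 i := mul_nonneg ENNReal.toReal_nonneg (hT2nn i)
    nlinarith [mul_nonneg h2 (by linarith : (0:ℝ) ≤ r i + (μ (A i)).toReal * T2 i),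
      mul_nonneg (sub_nonneg.2 h3) h4]
  have hR : |∑ i : Fin m, W ((i : ℕ) + 1) * r i| ≤ max Δ₁ Δ₂ := by
    rw [abs_le]
    constructor
    · have := le_max_right Δ₁ Δ₂
      linarith
    · exact le_trans hR_ub (le_max_left _ _)
  calc |(μ (⋂ i : Fin m, (A i)ᶜ)).toReal - ∏ i : Fin m, (μ ((A i)ᶜ)).toReal|
      = |(∑ i : Fin m, W ((i : ℕ) + 1) * e i) + ∑ i : Fin m, W ((i : ℕ) + 1) * r i| := by
        rw [hdecomp]
    _ ≤ |∑ i : Fin m, W ((i : ℕ) + 1) * e i| + |∑ i : Fin m, W ((i : ℕ) + 1) * r i| :=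
        abs_add_le _ _
    _ ≤ (1 - ∏ i : Fin m, (μ ((A i)ᶜ)).toReal) * φ + max Δ₁ Δ₂ := add_le_add hE hR
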